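/- For every integer t ≥ 0, the set {x ∈ X_i^* : H_i(x) − |x|_i ≤ t} is infinite. -/

import Mathlib

open scoped ENNReal

/-- Finite strings over an alphabet with `i` letters. -/
abbrev Str (i : ℕ) : Type := List (Fin i)

/-- A set of strings is prefix-free: no element is a proper prefix of another. -/
def PrefixFree {i : ℕ} (S : Set (Str i)) : Prop :=
  ∀ x ∈ S, ∀ y ∈ S, x <+: y → x = y

/-- A self-delimiting machine over the alphabet with `i` letters: a partial computable
function on strings whose domain is prefix-free. -/
structure Machine (i : ℕ) where
  f : Str i →. Str i
  partrec : Partrec f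
  prefixFree : PrefixFree f.Dom

/-- Program-size complexity of `x` relative to the machine `T`:
the least length of a program `y` with `T(y) = x` (with `min ∅ = ∞`). -/
noncomputable def Hc {i : ℕ} (T : Machine i) (x : Str i) : ℝ≥0∞ :=
  sInf {n : ℝ≥0∞ | ∃ y : Str i, (y.length : ℝ≥0∞) = n ∧ x ∈ T.f y}

/-- `U` is a universal machine: it minimizes program-size complexity up to an
additive constant among all machines. -/
def IsUniversal {i : ℕ} (U : Machine i) : Prop :=
  ∀ T : Machine i, ∃ c : ℕ, ∀ x : Str i, Hc U x ≤ Hc T x + (c : ℝ≥0∞)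

/-- A set of strings is computably enumerable if it is the domain of a
partial computable function. -/
def CEset {i : ℕ} (A : Set (Str i)) : Prop :=
  ∃ f : Str i →. Str i, Partrec f ∧ A = f.Dom

/-- A Gödel numbering for `L`: a computable function into binary strings,
injective on `L`. -/
def GoedelNumbering {i : ℕ} (L : Set (Str i)) (g : Str i → Str 2) : Prop :=
  Computable g ∧ Set.InjOn g L

section Aux

variable {i : ℕ}

lemma primrec_replicate (a : Fin i) : Primrec (fun n : ℕ => List.replicate n a) := by
  have h := Primrec.nat_rec₁ ([] : List (Fin i))
    (f := fun _ ih => a :: ih) (Primrec.list_cons.comp (Primrec.const a) Primrec.snd)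
  refine h.of_eq ?_
  intro n; induction n with
  | zero => rfl
  | succ n ih => simp [List.replicate_succ, ih]

/-- The string `aⁿb`. -/
def goodStr (a b : Fin i) (n : ℕ) : Str i := List.replicate n a ++ [b]

lemma goodStr_length (a b : Fin i) (n : ℕ) : (goodStr a b n).length = n + 1 := by
  simp [goodStr]

/-- The machine sending `aⁿb ↦ aⁿb aⁿb`. -/
def mf (a b : Fin i) : Str i →. Str i := fun y =>
  if y = goodStr a b (y.length - 1) then Part.some (y ++ y) else Part.none

lemma mf_partrec (a b : Fin i) : Partrec (mf a b) := by
  have hpred : PrimrecPred (fun y : Str i => y = goodStr a b (y.length - 1)) := by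
    apply PrimrecRel.comp Primrec.eq Primrec.id
    exact Primrec.list_append.comp
      ((primrec_replicate a).comp (Primrec.pred.comp Primrec.list_length))
      (Primrec.const [b])
  have hopt : Primrec (fun y : Str i =>
      if y = goodStr a b (y.length - 1) then some (y ++ y) else none) :=
    Primrec.ite hpred
      (Primrec.option_some.comp (Primrec.list_append.comp Primrec.id Primrec.id))
      (Primrec.const none)
  refine (Computable.ofOption hopt.to_comp).of_eq ?_
  intro y
  by_cases h : y = goodStr a b (y.length - 1)
  · rw [mf]; rw [if_pos h, if_pos h, Part.coe_some]
  · rw [mf]; rw [if_neg h, if_neg h, Part.coe_none]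

lemma mf_dom (a b : Fin i) (y : Str i) :
    y ∈ PFun.Dom (mf a b) ↔ y = goodStr a b (y.length - 1) := by
  show (mf a b y).Dom ↔ _
  rw [mf]
  by_cases h : y = goodStr a b (y.length - 1)
  · rw [if_pos h]; simpa using h
  · rw [if_neg h]; simpa using h

lemma mf_prefixFree {a b : Fin i} (hab : a ≠ b) : PrefixFree (PFun.Dom (mf a b)) := by
  intro x hx y hy hxy
  rw [mf_dom] at hx hy
  set m := x.length - 1 with hm
  set n := y.length - 1 with hn
  -- x = goodStr a b m, y = goodStr a b n, x <+: y
  have hxlen : x.length = m + 1 := by rw [hx, goodStr_length]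
  have hylen : y.length = n + 1 := by rw [hy, goodStr_length]
  have hle : m + 1 ≤ n + 1 := by
    rw [← hxlen, ← hylen]; exact hxy.length_le
  rcases Nat.lt_or_ge m n with hlt | hge
  · exfalso
    have htake : x = y.take (m + 1) := by
      rw [← hxlen]; exact (List.prefix_iff_eq_take.mp hxy)
    have : y.take (m + 1) = List.replicate (m + 1) a := by
      rw [hy]
      rw [goodStr, List.take_append_of_le_length (by simp [hlt, Nat.succ_le_of_lt])]
      simp [List.take_replicate, Nat.min_eq_left (Nat.succ_le_of_lt hlt)]
    rw [this] at htake
    have hbmem : b ∈ x := by rw [hx]; simp [goodStr]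
    rw [htake] at hbmem
    exact hab ((List.eq_of_mem_replicate hbmem).symm)
  · have : m = n := le_antisymm (by omega) hge
    rw [hx, hy, this]

lemma hc_good {a b : Fin i} (hab : a ≠ b) (n : ℕ) :
    Hc ⟨mf a b, mf_partrec a b, mf_prefixFree hab⟩ (goodStr a b n ++ goodStr a b n)
      ≤ ((n : ℝ≥0∞) + 1) := by
  apply sInf_le
  refine ⟨goodStr a b n, ?_, ?_⟩
  · rw [goodStr_length]; push_cast; ring
  · show _ ∈ mf a b _
    rw [mf, goodStr_length]
    simp

end Aux

/-- For every integer `t ≥ 0`, the set `{x ∈ Xᵢ* : Hᵢ(x) − |x|ᵢ ≤ t}` is infinite. -/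
theorem stmt_0 {i : ℕ} (hi : 2 ≤ i) (U : Machine i) (hU : IsUniversal U) (t : ℕ) :
    {x : Str i | Hc U x ≤ (x.length : ℝ≥0∞) + (t : ℝ≥0∞)}.Infinite := by
  have h0 : 0 < i := by omega
  have h1 : 1 < i := by omega
  set a : Fin i := ⟨0, h0⟩
  set b : Fin i := ⟨1, h1⟩
  have hab : a ≠ b := by simp [a, b, Fin.ext_iff]
  set M : Machine i := ⟨mf a b, mf_partrec a b, mf_prefixFree hab⟩ with hM
  obtain ⟨c, hc⟩ := hU M
  apply Set.infinite_of_injective_forall_mem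
    (f := fun n : ℕ => goodStr a b (n + c) ++ goodStr a b (n + c))
  · intro n m hnm
    have h2 := congrArg List.length hnm
    simp only [List.length_append, goodStr_length] at h2
    omega
  · intro n
    show Hc U _ ≤ _
    calc Hc U (goodStr a b (n + c) ++ goodStr a b (n + c))
        ≤ Hc M (goodStr a b (n + c) ++ goodStr a b (n + c)) + (c : ℝ≥0∞) := hc _
      _ ≤ ((n + c : ℕ) : ℝ≥0∞) + 1 + (c : ℝ≥0∞) := by
          rw [hM]
          exact add_le_add_left (hc_good hab (n + c)) _
      _ ≤ ((goodStr a b (n + c) ++ goodStr a b (n + c)).length : ℝ≥0∞) + (t : ℝ≥0∞) := by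
          simp only [List.length_append, goodStr_length]
          have hnat : (n + c) + 1 + c ≤ ((n + c + 1) + (n + c + 1)) + t := by omega
          calc ((n + c : ℕ) : ℝ≥0∞) + 1 + (c : ℝ≥0∞)
              = (((n + c) + 1 + c : ℕ) : ℝ≥0∞) := by push_cast; ring
            _ ≤ ((((n + c + 1) + (n + c + 1)) + t : ℕ) : ℝ≥0∞) := by
                exact_mod_cast hnat
            _ = _ := by push_cast; ring
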